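/- In the two-row model M1 with T rounds, α ∈ (0,1), row rewards R1 > R2 ≥ 0, unlearned rewards C1 ≤ R1 and C2 ≤ R2, and row 2 already learned, define V(t) as the optimal expected payoff over rounds t,…,T. If playing row 1 is strictly optimal at round t (i.e. α·(R1·(T−t+1)) + (1−α)·(C1 + R2·(T−t)) > R2·(T−t+1)), then playing row 1 is also strictly optimal at round t−1 (for any t ≥ 2): α·(R1·(T−t+2)) + (1−α)·(C1 + V(t)) > R2 + V(t). -/
import Mathlib


/-- Optimal expected payoff with `n` rounds remaining in the two-row model M1
where row 2 is already learned (deterministic reward `R2`), row 1 is unlearned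
(maximum reward `R1`, unlearned reward `C1`, learning probability `α`), and after
the current round the policy plays the better of the learned rows. -/
def Vrem (α R1 R2 C1 : ℝ) : ℕ → ℝ
  | 0 => 0
  | n + 1 => max (α * (R1 * ((n : ℝ) + 1)) + (1 - α) * (C1 + R2 * (n : ℝ)))
      (R2 * ((n : ℝ) + 1))

/-- If playing (unlearned) row 1 is strictly optimal at round `t`, it is also strictly
optimal at round `t - 1`.  Here `V(t)` is `Vrem (T - t + 1)`, the optimal expected
payoff over rounds t,…,T. -/
theorem stmt_8 (α R1 R2 C1 C2 : ℝ) (T t : ℕ) (ht2 : 2 ≤ t) (htT : t ≤ T)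
    (hα0 : 0 < α) (hα1 : α < 1) (hR : R2 < R1) (hR2 : 0 ≤ R2)
    (hC1 : C1 ≤ R1) (hC2 : C2 ≤ R2)
    (hopt : α * (R1 * ((T : ℝ) - t + 1)) + (1 - α) * (C1 + R2 * ((T : ℝ) - t))
        > R2 * ((T : ℝ) - t + 1)) :
    α * (R1 * ((T : ℝ) - t + 2)) + (1 - α) * (C1 + Vrem α R1 R2 C1 (T - t + 1))
      > R2 + Vrem α R1 R2 C1 (T - t + 1) := by
  have hcast : ((T - t : ℕ) : ℝ) = (T : ℝ) - t := by
    push_cast [Nat.cast_sub htT]; ring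
  have hV : Vrem α R1 R2 C1 (T - t + 1)
      = α * (R1 * ((T : ℝ) - t + 1)) + (1 - α) * (C1 + R2 * ((T : ℝ) - t)) := by
    show max _ _ = _
    rw [hcast]
    exact max_eq_left hopt.le
  rw [hV]
  nlinarith [mul_pos hα0 (sub_pos.mpr hR), mul_lt_mul_of_pos_left hopt (by linarith : (0:ℝ) < 1 - α)]
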